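/- Fix V ∈ ℝ, δ ∈ ℝ, 0 < A_− ≤ A_+, and let k ∈ ℂ be different from the four branch points ∓V/2 ± iA_± (so that d_±(k) ≠ 0 and E_±(k) is invertible). Then the explicitly defined matrix functions φ_+(x,k) and φ_−(x,k) for the two-sided step potential are continuous in x on all of ℝ and satisfy the scattering problem ∂_x φ = (ikσ₃ + Q(x))·φ at every x ≠ 0. -/

import Mathlib

/-- The argument of a complex number normalized to lie in `[−π/2, 3π/2)`:
if `arg z ∈ (−π, −π/2)` we add `2π`. -/
noncomputable def argS (z : ℂ) : ℝ :=
  if Complex.arg z < -(Real.pi / 2) then Complex.arg z + 2 * Real.pi else Complex.arg z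

/-- The branch `λ(k;A) = √(r₁r₂)·exp(i(φ₁+φ₂)/2)` of `(k² + A²)^{1/2}`, where
`k − iA = r₁e^{iφ₁}`, `k + iA = r₂e^{iφ₂}` with `φ₁, φ₂ ∈ [−π/2, 3π/2)`;
its branch cut lies along the segment `i[−A,A]` and it is continuous from the
right on the cut. -/
noncomputable def lamBr (A : ℝ) (k : ℂ) : ℂ :=
  ((Real.sqrt (‖k - Complex.I * (A : ℂ)‖ * ‖k + Complex.I * (A : ℂ)‖) : ℝ) : ℂ) *
    Complex.exp (Complex.I *
      (((argS (k - Complex.I * (A : ℂ)) + argS (k + Complex.I * (A : ℂ))) / 2 : ℝ) : ℂ))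

/-- Pauli matrix `σ₃`. -/
noncomputable def sigma3 : Matrix (Fin 2) (Fin 2) ℂ := !![1, 0; 0, -1]

/-- Pauli matrix `σ₁`. -/
noncomputable def sigma1 : Matrix (Fin 2) (Fin 2) ℂ := !![0, 1; 1, 0]

/-- `exp(c·σ₃) = diag(e^c, e^{−c})` (matrix exponential of the diagonal matrix `cσ₃`). -/
noncomputable def dexp (c : ℂ) : Matrix (Fin 2) (Fin 2) ℂ :=
  !![Complex.exp c, 0; 0, Complex.exp (-c)]

/-- `λ₊(k) = λ(k + V/2; A₊)`. -/
noncomputable def lamP (Ap V : ℝ) (k : ℂ) : ℂ := lamBr Ap (k + (V : ℂ) / 2)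

/-- `λ₋(k) = λ(k − V/2; A₋)`. -/
noncomputable def lamM (Am V : ℝ) (k : ℂ) : ℂ := lamBr Am (k - (V : ℂ) / 2)

/-- `E₊(k) = I + (iA₊/(λ₊(k) + (k + V/2)))·exp(iδσ₃)·σ₁`. -/
noncomputable def Ep (Ap V δ : ℝ) (k : ℂ) : Matrix (Fin 2) (Fin 2) ℂ :=
  1 + (Complex.I * (Ap : ℂ) / (lamP Ap V k + (k + (V : ℂ) / 2))) •
      (dexp (Complex.I * (δ : ℂ)) * sigma1)

/-- `E₋(k) = I + (iA₋/(λ₋(k) + (k − V/2)))·exp(−iδσ₃)·σ₁`. -/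
noncomputable def Em (Am V δ : ℝ) (k : ℂ) : Matrix (Fin 2) (Fin 2) ℂ :=
  1 + (Complex.I * (Am : ℂ) / (lamM Am V k + (k - (V : ℂ) / 2))) •
      (dexp (-(Complex.I * (δ : ℂ))) * sigma1)

/-- `d₊(k) = √(D₊(k))` with `D₊(k) = 2λ₊(k)/(λ₊(k) + (k + V/2))` (principal root). -/
noncomputable def dP (Ap V : ℝ) (k : ℂ) : ℂ :=
  (2 * lamP Ap V k / (lamP Ap V k + (k + (V : ℂ) / 2))) ^ ((1 : ℂ) / 2)

/-- `d₋(k) = √(D₋(k))` with `D₋(k) = 2λ₋(k)/(λ₋(k) + (k − V/2))` (principal root). -/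
noncomputable def dM (Am V : ℝ) (k : ℂ) : ℂ :=
  (2 * lamM Am V k / (lamM Am V k + (k - (V : ℂ) / 2))) ^ ((1 : ℂ) / 2)

/-- The two-sided step potential `q(x) = A₊e^{−iVx+iδ}` for `x ≥ 0`,
`q(x) = A₋e^{iVx−iδ}` for `x < 0`. -/
noncomputable def qstep (Am Ap V δ : ℝ) (x : ℝ) : ℂ :=
  if 0 ≤ x then (Ap : ℂ) * Complex.exp (Complex.I * ((-V * x + δ : ℝ) : ℂ))
  else (Am : ℂ) * Complex.exp (Complex.I * ((V * x - δ : ℝ) : ℂ))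

/-- `Q(x) = [[0, q(x)],[−conj(q(x)), 0]]` for the two-sided step potential. -/
noncomputable def Qstep (Am Ap V δ : ℝ) (x : ℝ) : Matrix (Fin 2) (Fin 2) ℂ :=
  !![0, qstep Am Ap V δ x; -(starRingEnd ℂ) (qstep Am Ap V δ x), 0]

/-- The Jost matrix `φ₊(x,k)` of the two-sided step potential. -/
noncomputable def phiP (Am Ap V δ : ℝ) (k : ℂ) (x : ℝ) : Matrix (Fin 2) (Fin 2) ℂ :=
  (dP Ap V k)⁻¹ •
    (if 0 ≤ x then
      dexp (-(Complex.I) * ((V * x / 2 : ℝ) : ℂ)) * Ep Ap V δ k *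
        dexp (Complex.I * lamP Ap V k * (x : ℂ))
    else
      dexp (Complex.I * ((V * x / 2 : ℝ) : ℂ)) * Em Am V δ k *
        dexp (Complex.I * lamM Am V k * (x : ℂ)) * (Em Am V δ k)⁻¹ * Ep Ap V δ k)

/-- The Jost matrix `φ₋(x,k)` of the two-sided step potential. -/
noncomputable def phiM (Am Ap V δ : ℝ) (k : ℂ) (x : ℝ) : Matrix (Fin 2) (Fin 2) ℂ :=
  (dM Am V k)⁻¹ •
    (if 0 ≤ x then
      dexp (-(Complex.I) * ((V * x / 2 : ℝ) : ℂ)) * Ep Ap V δ k *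
        dexp (Complex.I * lamP Ap V k * (x : ℂ)) * (Ep Ap V δ k)⁻¹ * Em Am V δ k
    else
      dexp (Complex.I * ((V * x / 2 : ℝ) : ℂ)) * Em Am V δ k *
        dexp (Complex.I * lamM Am V k * (x : ℂ)))

lemma argS_exp (z : ℂ) : (‖z‖ : ℂ) * Complex.exp (Complex.I * (argS z : ℝ)) = z := by
  unfold argS
  split
  · push_cast
    rw [mul_add, Complex.exp_add, show Complex.I * (2*Real.pi) = 2*Real.pi*Complex.I by ring,
      Complex.exp_two_pi_mul_I, mul_one, mul_comm Complex.I]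
    exact Complex.norm_mul_exp_arg_mul_I z
  · rw [mul_comm Complex.I]
    exact Complex.norm_mul_exp_arg_mul_I z

lemma lamBr_sq (A : ℝ) (k : ℂ) : lamBr A k ^ 2 = k ^ 2 + (A : ℂ) ^ 2 := by
  unfold lamBr
  have h1 := argS_exp (k - Complex.I * A)
  have h2 := argS_exp (k + Complex.I * A)
  have hs : ((Real.sqrt (‖k - Complex.I * A‖ * ‖k + Complex.I * A‖) : ℝ) : ℂ) ^ 2
      = ((‖k - Complex.I * A‖ : ℝ) : ℂ) * ((‖k + Complex.I * A‖ : ℝ) : ℂ) := by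
    rw [← Complex.ofReal_pow, Real.sq_sqrt (by positivity)]
    push_cast; ring
  have he : Complex.exp (Complex.I * (((argS (k - Complex.I * A) + argS (k + Complex.I * A)) / 2 : ℝ) : ℂ)) ^ 2
      = Complex.exp (Complex.I * (argS (k - Complex.I * A) : ℝ)) *
        Complex.exp (Complex.I * (argS (k + Complex.I * A) : ℝ)) := by
    rw [sq, ← Complex.exp_add, ← Complex.exp_add]
    congr 1
    push_cast; ring
  calc _ = (((Real.sqrt _ : ℝ) : ℂ)) ^ 2 * Complex.exp (Complex.I * (((argS (k - Complex.I * A) + argS (k + Complex.I * A)) / 2 : ℝ) : ℂ)) ^ 2 := by ring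
    _ = (((‖k - Complex.I * A‖ : ℝ) : ℂ) * Complex.exp (Complex.I * (argS (k - Complex.I * A) : ℝ))) *
        (((‖k + Complex.I * A‖ : ℝ) : ℂ) * Complex.exp (Complex.I * (argS (k + Complex.I * A) : ℝ))) := by
      rw [hs, he]; ring
    _ = (k - Complex.I * A) * (k + Complex.I * A) := by rw [h1, h2]
    _ = k ^ 2 + (A : ℂ) ^ 2 := by ring_nf; rw [Complex.I_sq]; ring

lemma lam_add_ne {A : ℝ} (hA : 0 < A) {lam kap : ℂ} (h : lam ^ 2 = kap ^ 2 + (A : ℂ) ^ 2) :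
    lam + kap ≠ 0 := by
  intro hc
  have : lam = -kap := by linear_combination hc
  rw [this] at h
  have hA2 : ((A : ℂ)) ^ 2 = 0 := by linear_combination -h
  have : (A : ℂ) = 0 := by exact pow_eq_zero_iff (by norm_num) |>.mp hA2
  exact absurd (Complex.ofReal_eq_zero.mp this) (ne_of_gt hA)

lemma lam_ne {A : ℝ} {lam kap : ℂ} (h : lam ^ 2 = kap ^ 2 + (A : ℂ) ^ 2)
    (h1 : kap ≠ Complex.I * A) (h2 : kap ≠ -(Complex.I * A)) : lam ≠ 0 := by
  intro hc
  rw [hc] at h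
  have hfac : (kap - Complex.I * A) * (kap + Complex.I * A) = 0 := by
    have : Complex.I ^ 2 = -1 := Complex.I_sq
    linear_combination -h - (A:ℂ)^2 * this
  rcases mul_eq_zero.mp hfac with hf | hf
  · exact h1 (by linear_combination hf)
  · exact h2 (by linear_combination hf)
lemma hasDerivAt_cexp_lin (a : ℂ) (x : ℝ) :
    HasDerivAt (fun ξ : ℝ => Complex.exp (a * ξ)) (a * Complex.exp (a * x)) x := by
  have h1 : HasDerivAt (fun ξ : ℝ => (ξ : ℂ)) 1 x := by
    simpa using (hasDerivAt_id x).ofReal_comp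
  have h2 := (h1.const_mul a).cexp
  convert h2 using 1
  ring

lemma G_entry (a b : ℂ) (E : Matrix (Fin 2) (Fin 2) ℂ) (i j : Fin 2) :
    (dexp a * E * dexp b) i j
      = Complex.exp ((![1,-1] : Fin 2 → ℂ) i * a) * E i j * Complex.exp ((![1,-1] : Fin 2 → ℂ) j * b) := by
  fin_cases i <;> fin_cases j <;>
    simp [dexp, Matrix.mul_apply, Fin.sum_univ_two, Matrix.vecMul, dotProduct]

lemma keyDeriv (a b : ℂ) (E : Matrix (Fin 2) (Fin 2) ℂ) (x : ℝ) (i j : Fin 2) :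
    HasDerivAt (fun ξ : ℝ => (dexp (a * ξ) * E * dexp (b * ξ)) i j)
      (((![1,-1] : Fin 2 → ℂ) i * a + (![1,-1] : Fin 2 → ℂ) j * b) *
        ((dexp (a * x) * E * dexp (b * x)) i j)) x := by
  simp only [G_entry]
  have h := ((hasDerivAt_cexp_lin ((![1,-1] : Fin 2 → ℂ) i * a) x).mul_const (E i j)).mul
    (hasDerivAt_cexp_lin ((![1,-1] : Fin 2 → ℂ) j * b) x)
  have hfun : (fun ξ : ℝ => Complex.exp ((![1,-1] : Fin 2 → ℂ) i * (a * ξ)) * E i j *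
      Complex.exp ((![1,-1] : Fin 2 → ℂ) j * (b * ξ)))
      = fun ξ : ℝ => Complex.exp ((![1,-1] : Fin 2 → ℂ) i * a * ξ) * E i j *
      Complex.exp ((![1,-1] : Fin 2 → ℂ) j * b * ξ) := by
    funext ξ; rw [mul_assoc ((![1,-1] : Fin 2 → ℂ) i), mul_assoc ((![1,-1] : Fin 2 → ℂ) j)]
  rw [hfun]
  refine h.congr_deriv ?_
  rw [mul_assoc ((![1,-1] : Fin 2 → ℂ) i), mul_assoc ((![1,-1] : Fin 2 → ℂ) j)]
  ring
lemma lifted (a b c : ℂ) (E C M : Matrix (Fin 2) (Fin 2) ℂ) (x : ℝ)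
    (hid : ∀ i j : Fin 2,
      ((![1,-1] : Fin 2 → ℂ) i * a + (![1,-1] : Fin 2 → ℂ) j * b) *
        ((dexp (a * x) * E * dexp (b * x)) i j)
        = (M * (dexp (a * x) * E * dexp (b * x))) i j)
    (i j : Fin 2) :
    HasDerivAt (fun ξ : ℝ => (c • (dexp (a * ξ) * E * dexp (b * ξ) * C)) i j)
      ((M * (c • (dexp (a * x) * E * dexp (b * x) * C))) i j) x := by
  have h0 := keyDeriv a b E x i 0
  have h1 := keyDeriv a b E x i 1
  have h := ((h0.mul_const (C 0 j)).add (h1.mul_const (C 1 j))).const_mul c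
  have hfun : (fun ξ : ℝ => (c • (dexp (a * ξ) * E * dexp (b * ξ) * C)) i j)
      = fun ξ : ℝ => c * ((dexp (a * ξ) * E * dexp (b * ξ)) i 0 * C 0 j
        + (dexp (a * ξ) * E * dexp (b * ξ)) i 1 * C 1 j) := by
    funext ξ
    simp [Matrix.mul_apply, Fin.sum_univ_two, Matrix.smul_apply, smul_eq_mul]
  rw [hfun]
  refine h.congr_deriv ?_
  rw [hid i 0, hid i 1]
  simp [Matrix.mul_apply, Fin.sum_univ_two, Matrix.smul_apply, smul_eq_mul]
  try ring
set_option maxHeartbeats 1000000 in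
lemma coreId (k v d A lam : ℂ)
    (hlk : lam + (k + v / 2) ≠ 0)
    (hsq : lam ^ 2 = (k + v / 2) ^ 2 + A ^ 2)
    (E : Matrix (Fin 2) (Fin 2) ℂ)
    (hE : E = 1 + (Complex.I * A / (lam + (k + v / 2))) • (dexp (Complex.I * d) * sigma1))
    (x : ℝ) (i j : Fin 2) :
    ((![1,-1] : Fin 2 → ℂ) i * (-(Complex.I * v) / 2) + (![1,-1] : Fin 2 → ℂ) j * (Complex.I * lam)) *
        ((dexp (-(Complex.I * v) / 2 * x) * E * dexp (Complex.I * lam * x)) i j) =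
      ((((Complex.I * k) • sigma3 +
          !![0, A * Complex.exp (Complex.I * (-(v * x) + d));
             -(A * Complex.exp (Complex.I * (v * x - d))), 0]) *
        (dexp (-(Complex.I * v) / 2 * x) * E * dexp (Complex.I * lam * x))) i j) := by
  subst hE
  have e1 : Complex.exp (Complex.I * (-(v * x) + d))
      = Complex.exp (-(Complex.I * v) / 2 * x) ^ 2 * Complex.exp (Complex.I * d) := by
    rw [sq, ← Complex.exp_add, ← Complex.exp_add]; congr 1; ring
  have e2 : Complex.exp (Complex.I * (v * x - d)) * (Complex.exp (-(Complex.I * v) / 2 * x) ^ 2 * Complex.exp (Complex.I * d)) = 1 := by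
    rw [sq, ← Complex.exp_add, ← Complex.exp_add, ← Complex.exp_add,
      show Complex.I * (v * ↑x - d) + (-(Complex.I * v) / 2 * ↑x + -(Complex.I * v) / 2 * ↑x + Complex.I * d) = 0 by ring,
      Complex.exp_zero]
  have e3 : Complex.exp (Complex.I * (v * x - d))
      = (Complex.exp (-(Complex.I * v) / 2 * x) ^ 2 * Complex.exp (Complex.I * d))⁻¹ :=
    eq_inv_of_mul_eq_one_left (by rw [mul_comm] at e2 ⊢; exact e2)
  have hw := Complex.exp_ne_zero (-(Complex.I * v) / 2 * (x:ℂ))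
  have hu := Complex.exp_ne_zero (Complex.I * lam * (x:ℂ))
  have hg := Complex.exp_ne_zero (Complex.I * d)
  have hlk2 : lam * 2 + (k * 2 + v) ≠ 0 := by
    intro hc; exact hlk (by linear_combination hc / 2)
  have hEE : (1 : Matrix (Fin 2) (Fin 2) ℂ) + (Complex.I * A / (lam + (k + v / 2))) • (dexp (Complex.I * d) * sigma1)
      = !![1, Complex.I * A / (lam + (k + v / 2)) * Complex.exp (Complex.I * d);
           Complex.I * A / (lam + (k + v / 2)) * Complex.exp (-(Complex.I * d)), 1] := by
    ext a b
    fin_cases a <;> fin_cases b <;>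
      simp [dexp, sigma1, Matrix.mul_apply, Matrix.one_apply, Fin.sum_univ_two,
        Matrix.vecMul, dotProduct]
  have hlk3 : v + lam * 2 + k * 2 ≠ 0 := by
    intro hc; exact hlk (by linear_combination hc / 2)
  rw [hEE]
  fin_cases i <;> fin_cases j <;>
    simp [e1, e3, sigma3, dexp, Matrix.mul_apply, Matrix.smul_apply, Fin.sum_univ_two,
      Matrix.vecMul, dotProduct, smul_eq_mul, Complex.exp_neg] <;>
    (set W := Complex.exp (-(Complex.I * v) / 2 * (x:ℂ)) with hW
     set U := Complex.exp (Complex.I * lam * (x:ℂ)) with hU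
     set G := Complex.exp (Complex.I * d) with hG
     field_simp [hlk, hlk2, hlk3, hw, hu, hg])
  · have hs4 : 2 * lam + (2 * k + v) ≠ 0 := by intro hc; exact hlk (by linear_combination hc / 2)
    field_simp
    linear_combination 4 * hsq
  · have hs4 : 2 * lam + (2 * k + v) ≠ 0 := by intro hc; exact hlk (by linear_combination hc / 2)
    field_simp
    linear_combination (-A * (2 * lam + (2 * k + v))) * Complex.I_sq
  · have hs4 : 2 * lam + (2 * k + v) ≠ 0 := by intro hc; exact hlk (by linear_combination hc / 2)
    field_simp
    linear_combination (A * (2 * lam + (2 * k + v))) * Complex.I_sq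
  · have hs4 : 2 * lam + (2 * k + v) ≠ 0 := by intro hc; exact hlk (by linear_combination hc / 2)
    field_simp
    linear_combination (-4) * hsq
lemma dexp_zero : dexp 0 = 1 := by
  rw [dexp, Matrix.one_fin_two]
  norm_num

lemma continuous_dexp {f : ℝ → ℂ} (hf : Continuous f) :
    Continuous fun x => dexp (f x) := by
  apply continuous_matrix
  intro i j
  fin_cases i <;> fin_cases j <;> simp [dexp] <;> fun_prop

lemma E_mul_inv (k v d A lam : ℂ)
    (hlk : lam + (k + v / 2) ≠ 0)
    (hsq : lam ^ 2 = (k + v / 2) ^ 2 + A ^ 2)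
    (hlam : lam ≠ 0)
    (E : Matrix (Fin 2) (Fin 2) ℂ)
    (hE : E = 1 + (Complex.I * A / (lam + (k + v / 2))) • (dexp (Complex.I * d) * sigma1)) :
    E * E⁻¹ = 1 := by
  apply Matrix.mul_nonsing_inv
  rw [isUnit_iff_ne_zero]
  have hdet : E.det = 2 * lam / (lam + (k + v / 2)) := by
    subst hE
    rw [Matrix.det_fin_two]
    simp [dexp, sigma1, Matrix.mul_apply, Matrix.one_apply, Fin.sum_univ_two,
      Matrix.vecMul, dotProduct, Complex.exp_neg]
    have hlk2 : lam * 2 + (k * 2 + v) ≠ 0 := by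
      intro hc; exact hlk (by linear_combination hc / 2)
    field_simp [hlk, hlk2, Complex.exp_ne_zero]
    linear_combination (-4) * hsq + (-4*A^2) * Complex.I_sq
  rw [hdet]
  exact div_ne_zero (mul_ne_zero two_ne_zero hlam) hlk
set_option maxHeartbeats 1000000 in
/-- For `k` different from the four branch points `∓V/2 ± iA±`, the explicit Jost
matrices `φ₊(x,k)` and `φ₋(x,k)` of the two-sided step potential are continuous in `x`
on all of `ℝ` and satisfy the scattering problem `∂ₓφ = (ikσ₃ + Q(x))φ` at every
`x ≠ 0`. -/
theorem step_Jost_continuous_and_solve (Am Ap V δ : ℝ) (hm : 0 < Am) (hmp : Am ≤ Ap)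
    (k : ℂ)
    (h1 : k ≠ -(V : ℂ) / 2 + Complex.I * (Ap : ℂ))
    (h2 : k ≠ -(V : ℂ) / 2 - Complex.I * (Ap : ℂ))
    (h3 : k ≠ (V : ℂ) / 2 + Complex.I * (Am : ℂ))
    (h4 : k ≠ (V : ℂ) / 2 - Complex.I * (Am : ℂ)) :
    Continuous (fun x : ℝ => phiP Am Ap V δ k x) ∧
    Continuous (fun x : ℝ => phiM Am Ap V δ k x) ∧
    (∀ x : ℝ, x ≠ 0 → ∀ i j : Fin 2,
      HasDerivAt (fun ξ : ℝ => phiP Am Ap V δ k ξ i j)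
        ((((Complex.I * k) • sigma3 + Qstep Am Ap V δ x) * phiP Am Ap V δ k x) i j) x) ∧
    (∀ x : ℝ, x ≠ 0 → ∀ i j : Fin 2,
      HasDerivAt (fun ξ : ℝ => phiM Am Ap V δ k ξ i j)
        ((((Complex.I * k) • sigma3 + Qstep Am Ap V δ x) * phiM Am Ap V δ k x) i j) x) := by
  have hAp : 0 < Ap := lt_of_lt_of_le hm hmp
  -- plus-side algebraic facts
  have hsqp : lamP Ap V k ^ 2 = (k + (V : ℂ) / 2) ^ 2 + (Ap : ℂ) ^ 2 := lamBr_sq Ap _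
  have hlkp : lamP Ap V k + (k + (V : ℂ) / 2) ≠ 0 := lam_add_ne hAp hsqp
  have hlamp : lamP Ap V k ≠ 0 :=
    lam_ne hsqp (fun hc => h1 (by linear_combination hc)) (fun hc => h2 (by linear_combination hc))
  -- minus-side algebraic facts
  have hsqm0 : lamM Am V k ^ 2 = (k - (V : ℂ) / 2) ^ 2 + (Am : ℂ) ^ 2 := lamBr_sq Am _
  have hsqm : lamM Am V k ^ 2 = (k + -(V : ℂ) / 2) ^ 2 + (Am : ℂ) ^ 2 := by linear_combination hsqm0
  have hlkm0 : lamM Am V k + (k - (V : ℂ) / 2) ≠ 0 := lam_add_ne hm hsqm0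
  have hlkm : lamM Am V k + (k + -(V : ℂ) / 2) ≠ 0 := by
    rw [show k + -(V : ℂ) / 2 = k - (V : ℂ) / 2 by ring]; exact hlkm0
  have hlamm : lamM Am V k ≠ 0 :=
    lam_ne hsqm0 (fun hc => h3 (by linear_combination hc)) (fun hc => h4 (by linear_combination hc))
  -- E matrices
  have hEp_eq : Ep Ap V δ k = 1 + (Complex.I * (Ap : ℂ) / (lamP Ap V k + (k + (V : ℂ) / 2))) •
      (dexp (Complex.I * (δ : ℂ)) * sigma1) := rfl
  have hEm_eq : Em Am V δ k = 1 + (Complex.I * (Am : ℂ) / (lamM Am V k + (k + -(V : ℂ) / 2))) •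
      (dexp (Complex.I * (-(δ : ℂ))) * sigma1) := by
    rw [Em, show lamM Am V k + (k - (V : ℂ) / 2) = lamM Am V k + (k + -(V : ℂ) / 2) by ring,
      show -(Complex.I * (δ : ℂ)) = Complex.I * (-(δ : ℂ)) by ring]
  have hEpinv : Ep Ap V δ k * (Ep Ap V δ k)⁻¹ = 1 :=
    E_mul_inv k (V : ℂ) (δ : ℂ) (Ap : ℂ) _ hlkp hsqp hlamp _ hEp_eq
  have hEminv : Em Am V δ k * (Em Am V δ k)⁻¹ = 1 :=
    E_mul_inv k (-(V : ℂ)) (-(δ : ℂ)) (Am : ℂ) _ hlkm hsqm hlamm _ hEm_eq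
  -- piecewise descriptions
  have hPpos : ∀ ξ : ℝ, 0 ≤ ξ → phiP Am Ap V δ k ξ = (dP Ap V k)⁻¹ •
      (dexp (-(Complex.I * (V : ℂ)) / 2 * ξ) * Ep Ap V δ k *
        dexp (Complex.I * lamP Ap V k * ξ) * 1) := by
    intro ξ hξ
    rw [phiP, if_pos hξ, mul_one,
      show -(Complex.I) * ((V * ξ / 2 : ℝ) : ℂ) = -(Complex.I * (V : ℂ)) / 2 * (ξ : ℂ) by push_cast; ring]
  have hPneg : ∀ ξ : ℝ, ξ < 0 → phiP Am Ap V δ k ξ = (dP Ap V k)⁻¹ •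
      (dexp (-(Complex.I * -(V : ℂ)) / 2 * ξ) * Em Am V δ k *
        dexp (Complex.I * lamM Am V k * ξ) * ((Em Am V δ k)⁻¹ * Ep Ap V δ k)) := by
    intro ξ hξ
    rw [phiP, if_neg (not_le.mpr hξ),
      show Complex.I * ((V * ξ / 2 : ℝ) : ℂ) = -(Complex.I * -(V : ℂ)) / 2 * (ξ : ℂ) by push_cast; ring,
      mul_assoc (dexp (-(Complex.I * -(V : ℂ)) / 2 * (ξ : ℂ)) * Em Am V δ k *
        dexp (Complex.I * lamM Am V k * (ξ : ℂ))) (Em Am V δ k)⁻¹ (Ep Ap V δ k)]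
  have hMpos : ∀ ξ : ℝ, 0 ≤ ξ → phiM Am Ap V δ k ξ = (dM Am V k)⁻¹ •
      (dexp (-(Complex.I * (V : ℂ)) / 2 * ξ) * Ep Ap V δ k *
        dexp (Complex.I * lamP Ap V k * ξ) * ((Ep Ap V δ k)⁻¹ * Em Am V δ k)) := by
    intro ξ hξ
    rw [phiM, if_pos hξ,
      show -(Complex.I) * ((V * ξ / 2 : ℝ) : ℂ) = -(Complex.I * (V : ℂ)) / 2 * (ξ : ℂ) by push_cast; ring,
      mul_assoc (dexp (-(Complex.I * (V : ℂ)) / 2 * (ξ : ℂ)) * Ep Ap V δ k *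
        dexp (Complex.I * lamP Ap V k * (ξ : ℂ))) (Ep Ap V δ k)⁻¹ (Em Am V δ k)]
  have hMneg : ∀ ξ : ℝ, ξ < 0 → phiM Am Ap V δ k ξ = (dM Am V k)⁻¹ •
      (dexp (-(Complex.I * -(V : ℂ)) / 2 * ξ) * Em Am V δ k *
        dexp (Complex.I * lamM Am V k * ξ) * 1) := by
    intro ξ hξ
    rw [phiM, if_neg (not_le.mpr hξ), mul_one,
      show Complex.I * ((V * ξ / 2 : ℝ) : ℂ) = -(Complex.I * -(V : ℂ)) / 2 * (ξ : ℂ) by push_cast; ring]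
  -- Q description
  have hQpos : ∀ x : ℝ, 0 ≤ x → Qstep Am Ap V δ x =
      !![0, (Ap : ℂ) * Complex.exp (Complex.I * (-((V : ℂ) * x) + (δ : ℂ)));
         -((Ap : ℂ) * Complex.exp (Complex.I * ((V : ℂ) * x - (δ : ℂ)))), 0] := by
    intro x hx
    have harg : Complex.I * ((-V * x + δ : ℝ) : ℂ) = Complex.I * (-((V : ℂ) * x) + (δ : ℂ)) := by
      push_cast; ring
    have hconj : (starRingEnd ℂ) ((Ap : ℂ) * Complex.exp (Complex.I * (-((V : ℂ) * x) + (δ : ℂ))))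
        = (Ap : ℂ) * Complex.exp (Complex.I * ((V : ℂ) * x - (δ : ℂ))) := by
      rw [map_mul, Complex.conj_ofReal, ← Complex.exp_conj]
      congr 1
      simp only [map_add, map_neg, map_mul, Complex.conj_ofReal, Complex.conj_I]
      ring
    rw [Qstep, qstep, if_pos hx, harg, hconj]
  have hQneg : ∀ x : ℝ, x < 0 → Qstep Am Ap V δ x =
      !![0, (Am : ℂ) * Complex.exp (Complex.I * (-(-(V : ℂ) * x) + -(δ : ℂ)));
         -((Am : ℂ) * Complex.exp (Complex.I * (-(V : ℂ) * x - -(δ : ℂ)))), 0] := by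
    intro x hx
    have harg : Complex.I * ((V * x - δ : ℝ) : ℂ) = Complex.I * (-(-(V : ℂ) * x) + -(δ : ℂ)) := by
      push_cast; ring
    have hconj : (starRingEnd ℂ) ((Am : ℂ) * Complex.exp (Complex.I * (-(-(V : ℂ) * x) + -(δ : ℂ))))
        = (Am : ℂ) * Complex.exp (Complex.I * (-(V : ℂ) * x - -(δ : ℂ))) := by
      rw [map_mul, Complex.conj_ofReal, ← Complex.exp_conj]
      congr 1
      simp only [map_add, map_neg, map_mul, Complex.conj_ofReal, Complex.conj_I]
      ring
    rw [Qstep, qstep, if_neg (not_le.mpr hx), harg, hconj]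
  -- identities for the two regions
  have hidP : ∀ x : ℝ, 0 ≤ x → ∀ i j : Fin 2,
      ((![1,-1] : Fin 2 → ℂ) i * (-(Complex.I * (V : ℂ)) / 2) +
        (![1,-1] : Fin 2 → ℂ) j * (Complex.I * lamP Ap V k)) *
        ((dexp (-(Complex.I * (V : ℂ)) / 2 * x) * Ep Ap V δ k *
          dexp (Complex.I * lamP Ap V k * x)) i j) =
      ((((Complex.I * k) • sigma3 + Qstep Am Ap V δ x) *
        (dexp (-(Complex.I * (V : ℂ)) / 2 * x) * Ep Ap V δ k *
          dexp (Complex.I * lamP Ap V k * x))) i j) := by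
    intro x hx i j
    rw [hQpos x hx]
    exact coreId k (V : ℂ) (δ : ℂ) (Ap : ℂ) (lamP Ap V k) hlkp hsqp _ hEp_eq x i j
  have hidM : ∀ x : ℝ, x < 0 → ∀ i j : Fin 2,
      ((![1,-1] : Fin 2 → ℂ) i * (-(Complex.I * -(V : ℂ)) / 2) +
        (![1,-1] : Fin 2 → ℂ) j * (Complex.I * lamM Am V k)) *
        ((dexp (-(Complex.I * -(V : ℂ)) / 2 * x) * Em Am V δ k *
          dexp (Complex.I * lamM Am V k * x)) i j) =
      ((((Complex.I * k) • sigma3 + Qstep Am Ap V δ x) *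
        (dexp (-(Complex.I * -(V : ℂ)) / 2 * x) * Em Am V δ k *
          dexp (Complex.I * lamM Am V k * x))) i j) := by
    intro x hx i j
    rw [hQneg x hx]
    have := coreId k (-(V : ℂ)) (-(δ : ℂ)) (Am : ℂ) (lamM Am V k)
      (by rw [show k + -(V : ℂ) / 2 = k + (-(V:ℂ)) / 2 by ring] at hlkm; exact hlkm)
      (by rw [show k + -(V : ℂ) / 2 = k + (-(V:ℂ)) / 2 by ring] at hsqm; exact hsqm) _ hEm_eq x i j
    exact this
  -- continuity of phiP
  have contP : Continuous (fun x : ℝ => phiP Am Ap V δ k x) := by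
    have hrepr : (fun x : ℝ => phiP Am Ap V δ k x) = fun x : ℝ =>
        if (0 : ℝ) ≤ x then
          (dP Ap V k)⁻¹ • (dexp (-(Complex.I) * ((V * x / 2 : ℝ) : ℂ)) * Ep Ap V δ k *
            dexp (Complex.I * lamP Ap V k * (x : ℂ)))
        else
          (dP Ap V k)⁻¹ • (dexp (Complex.I * ((V * x / 2 : ℝ) : ℂ)) * Em Am V δ k *
            dexp (Complex.I * lamM Am V k * (x : ℂ)) * (Em Am V δ k)⁻¹ * Ep Ap V δ k) := by
      funext x; rw [phiP]; split <;> rfl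
    rw [hrepr]
    refine Continuous.if_le ?_ ?_ continuous_const continuous_id ?_
    · exact (continuous_const_smul _).comp (((continuous_dexp (f := (fun x : ℝ => -(Complex.I) * ((V * x / 2 : ℝ) : ℂ))) (by fun_prop)).matrix_mul continuous_const).matrix_mul
        (continuous_dexp (f := (fun x : ℝ => Complex.I * lamP Ap V k * (x : ℂ))) (by fun_prop)))
    · exact (continuous_const_smul _).comp (((((continuous_dexp (f := (fun x : ℝ => Complex.I * ((V * x / 2 : ℝ) : ℂ))) (by fun_prop)).matrix_mul continuous_const).matrix_mul
        (continuous_dexp (f := (fun x : ℝ => Complex.I * lamM Am V k * (x : ℂ))) (by fun_prop))).matrix_mul continuous_const).matrix_mul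
        continuous_const)
    · intro x hx
      have hx0 : x = 0 := hx.symm
      subst hx0
      norm_num [dexp_zero]
      rw [show Em Am V δ k * (Em Am V δ k)⁻¹ * Ep Ap V δ k
          = (Em Am V δ k * (Em Am V δ k)⁻¹) * Ep Ap V δ k from rfl, hEminv, one_mul]
  have contM : Continuous (fun x : ℝ => phiM Am Ap V δ k x) := by
    have hrepr : (fun x : ℝ => phiM Am Ap V δ k x) = fun x : ℝ =>
        if (0 : ℝ) ≤ x then
          (dM Am V k)⁻¹ • (dexp (-(Complex.I) * ((V * x / 2 : ℝ) : ℂ)) * Ep Ap V δ k *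
            dexp (Complex.I * lamP Ap V k * (x : ℂ)) * (Ep Ap V δ k)⁻¹ * Em Am V δ k)
        else
          (dM Am V k)⁻¹ • (dexp (Complex.I * ((V * x / 2 : ℝ) : ℂ)) * Em Am V δ k *
            dexp (Complex.I * lamM Am V k * (x : ℂ))) := by
      funext x; rw [phiM]; split <;> rfl
    rw [hrepr]
    refine Continuous.if_le ?_ ?_ continuous_const continuous_id ?_
    · exact (continuous_const_smul _).comp (((((continuous_dexp (f := (fun x : ℝ => -(Complex.I) * ((V * x / 2 : ℝ) : ℂ))) (by fun_prop)).matrix_mul continuous_const).matrix_mul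
        (continuous_dexp (f := (fun x : ℝ => Complex.I * lamP Ap V k * (x : ℂ))) (by fun_prop))).matrix_mul continuous_const).matrix_mul
        continuous_const)
    · exact (continuous_const_smul _).comp (((continuous_dexp (f := (fun x : ℝ => Complex.I * ((V * x / 2 : ℝ) : ℂ))) (by fun_prop)).matrix_mul continuous_const).matrix_mul
        (continuous_dexp (f := (fun x : ℝ => Complex.I * lamM Am V k * (x : ℂ))) (by fun_prop)))
    · intro x hx
      have hx0 : x = 0 := hx.symm
      subst hx0
      norm_num [dexp_zero]
      rw [show Ep Ap V δ k * (Ep Ap V δ k)⁻¹ * Em Am V δ k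
          = (Ep Ap V δ k * (Ep Ap V δ k)⁻¹) * Em Am V δ k from rfl, hEpinv, one_mul]
  refine ⟨contP, contM, ?_, ?_⟩
  · intro x hx i j
    rcases lt_or_gt_of_ne hx with hneg | hpos
    · rw [hPneg x hneg]
      have key := lifted (-(Complex.I * -(V : ℂ)) / 2) (Complex.I * lamM Am V k) (dP Ap V k)⁻¹
        (Em Am V δ k) ((Em Am V δ k)⁻¹ * Ep Ap V δ k)
        ((Complex.I * k) • sigma3 + Qstep Am Ap V δ x) x (hidM x hneg) i j
      exact key.congr_of_eventuallyEq (Filter.eventuallyEq_of_mem (Iio_mem_nhds hneg)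
        (fun ξ hξ => by rw [hPneg ξ hξ]))
    · rw [hPpos x (le_of_lt hpos)]
      have key := lifted (-(Complex.I * (V : ℂ)) / 2) (Complex.I * lamP Ap V k) (dP Ap V k)⁻¹
        (Ep Ap V δ k) 1
        ((Complex.I * k) • sigma3 + Qstep Am Ap V δ x) x (hidP x (le_of_lt hpos)) i j
      exact key.congr_of_eventuallyEq (Filter.eventuallyEq_of_mem (Ioi_mem_nhds hpos)
        (fun ξ hξ => by rw [hPpos ξ (le_of_lt hξ)]))
  · intro x hx i j
    rcases lt_or_gt_of_ne hx with hneg | hpos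
    · rw [hMneg x hneg]
      have key := lifted (-(Complex.I * -(V : ℂ)) / 2) (Complex.I * lamM Am V k) (dM Am V k)⁻¹
        (Em Am V δ k) 1
        ((Complex.I * k) • sigma3 + Qstep Am Ap V δ x) x (hidM x hneg) i j
      exact key.congr_of_eventuallyEq (Filter.eventuallyEq_of_mem (Iio_mem_nhds hneg)
        (fun ξ hξ => by rw [hMneg ξ hξ]))
    · rw [hMpos x (le_of_lt hpos)]
      have key := lifted (-(Complex.I * (V : ℂ)) / 2) (Complex.I * lamP Ap V k) (dM Am V k)⁻¹
        (Ep Ap V δ k) ((Ep Ap V δ k)⁻¹ * Em Am V δ k)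
        ((Complex.I * k) • sigma3 + Qstep Am Ap V δ x) x (hidP x (le_of_lt hpos)) i j
      exact key.congr_of_eventuallyEq (Filter.eventuallyEq_of_mem (Ioi_mem_nhds hpos)
        (fun ξ hξ => by rw [hMpos ξ (le_of_lt hξ)]))
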